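/- Strong-law consistency of the proposed estimating equation at the true parameter: let (Xᵢ, Yᵢ*) for i ∈ ℕ be an i.i.d. sequence with the same joint distribution as (X, Y*), suppose every function ω ↦ U k (X ω) (k ∈ Fin K) is integrable, and suppose 𝔼[U(Y, X)] = 0. Then the sample average (1/n) Σ_{i=1}^{n} φ(Yᵢ*, Xᵢ) converges to 0 ∈ ℝ^d almost surely as n → ∞, where φ i x = Σ_k (P⁻¹) k i • U k x. -/

import Mathlib

open MeasureTheory ProbabilityTheory Finset Filter

/-- Decomposition of an integral over the fibers of a map into a finite type. -/
lemma pram_decomp_aux {Ω ι E : Type*} [MeasurableSpace Ω] [Fintype ι] [MeasurableSpace ι]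
    [MeasurableSingletonClass ι] [NormedAddCommGroup E] [NormedSpace ℝ E]
    (μ : Measure Ω) (Z : Ω → ι) (hZ : Measurable Z) (g : ι → Ω → E)
    (hg : ∀ i, Integrable (g i) μ) :
    ∫ ω, g (Z ω) ω ∂μ = ∑ i : ι, ∫ ω in {ω | Z ω = i}, g i ω ∂μ := by
  have hms : ∀ i : ι, MeasurableSet {ω | Z ω = i} := fun i => hZ (measurableSet_singleton i)
  have h1 : (fun ω => g (Z ω) ω) = fun ω => ∑ i : ι, Set.indicator {ω | Z ω = i} (g i) ω := by
    funext ω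
    rw [Finset.sum_eq_single (Z ω)]
    · rw [Set.indicator_of_mem (by simp : ω ∈ {ω' | Z ω' = Z ω})]
    · intro b _ hb
      exact Set.indicator_of_notMem (fun h => hb (by simpa using h.symm)) _
    · simp
  rw [h1, integral_finset_sum]
  · exact Finset.sum_congr rfl fun i _ => integral_indicator (hms i)
  · exact fun i _ => (hg i).indicator (hms i)

/-- Strong-law consistency of the proposed estimating equation at the true parameter:
for an i.i.d. sequence `(Xᵢ, Yᵢ*)` distributed as `(X, Y*)`, if `𝔼[U(Y, X)] = 0`, then
`(1/n) ∑_{i<n} φ(Yᵢ*, Xᵢ) → 0` almost surely, where `φ i x = ∑ k, (P⁻¹) k i • U k x`. -/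
theorem pram_strong_law_consistency {Ω 𝒳 : Type*} [MeasurableSpace Ω] [MeasurableSpace 𝒳]
    (μ : Measure Ω) [IsProbabilityMeasure μ] {K d : ℕ}
    (Y Ystar : Ω → Fin K) (X : Ω → 𝒳)
    (hY : Measurable Y) (hYstar : Measurable Ystar) (hX : Measurable X)
    (P : Matrix (Fin K) (Fin K) ℝ) (hP : IsUnit P.det)
    (hpram : ∀ (i j : Fin K) (A : Set 𝒳), MeasurableSet A →
      (μ {ω | Ystar ω = i ∧ Y ω = j ∧ X ω ∈ A}).toReal
        = P i j * (μ {ω | Y ω = j ∧ X ω ∈ A}).toReal)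
    (U : Fin K → 𝒳 → (Fin d → ℝ)) (hU : ∀ k, Measurable (U k))
    (hUint : ∀ k : Fin K, Integrable (fun ω => U k (X ω)) μ)
    (hmean : ∫ ω, U (Y ω) (X ω) ∂μ = 0)
    (φ : Fin K → 𝒳 → (Fin d → ℝ))
    (hφ : ∀ i x, φ i x = ∑ k : Fin K, P⁻¹ k i • U k x)
    (Xs : ℕ → Ω → 𝒳) (Ys : ℕ → Ω → Fin K)
    (hXs : ∀ n, Measurable (Xs n)) (hYs : ∀ n, Measurable (Ys n))
    (hindep : iIndepFun
      (fun n ω => (Xs n ω, Ys n ω)) μ)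
    (hident : ∀ n : ℕ,
      IdentDistrib (fun ω => (Xs n ω, Ys n ω)) (fun ω => (X ω, Ystar ω)) μ μ) :
    ∀ᵐ ω ∂μ, Tendsto
      (fun n : ℕ => (n : ℝ)⁻¹ • ∑ i ∈ Finset.range n, φ (Ys i ω) (Xs i ω))
      atTop (nhds (0 : Fin d → ℝ)) := by
  -- measurability of φ i
  have hφm : ∀ i, Measurable (φ i) := by
    intro i
    have : φ i = fun x => ∑ k : Fin K, P⁻¹ k i • U k x := funext (hφ i)
    rw [this]
    exact Finset.measurable_sum _ fun k _ => (hU k).const_smul (P⁻¹ k i)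
  -- integrability of φ i ∘ X
  have hφint : ∀ i, Integrable (fun ω => φ i (X ω)) μ := by
    intro i
    have : (fun ω => φ i (X ω)) = fun ω => ∑ k : Fin K, P⁻¹ k i • U k (X ω) := by
      funext ω; exact hφ i (X ω)
    rw [this]
    exact integrable_finset_sum _ fun k _ => (hUint k).smul (P⁻¹ k i)
  -- Step C: the unbiasedness transfer via the PRAM mechanism
  have stepC : ∀ (i j k : Fin K),
      ∫ ω in {ω | Ystar ω = i ∧ Y ω = j}, U k (X ω) ∂μ
        = P i j • ∫ ω in {ω | Y ω = j}, U k (X ω) ∂μ := by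
    intro i j k
    set s : Set Ω := {ω | Ystar ω = i ∧ Y ω = j} with hs_def
    set t : Set Ω := {ω | Y ω = j} with ht_def
    have hsm : MeasurableSet s :=
      (hYstar (measurableSet_singleton i)).inter (hY (measurableSet_singleton j))
    have htm : MeasurableSet t := hY (measurableSet_singleton j)
    have hst : s ⊆ t := fun ω hω => hω.2
    by_cases h0 : μ t = 0
    · have hs0 : μ s = 0 := measure_mono_null hst h0
      rw [Measure.restrict_eq_zero.mpr hs0, Measure.restrict_eq_zero.mpr h0]
      simp
    · -- restate hpram in terms of pushforward measures
      have key : ∀ A : Set 𝒳, MeasurableSet A →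
          (((μ.restrict s).map X) A).toReal = P i j * (((μ.restrict t).map X) A).toReal := by
        intro A hA
        rw [Measure.map_apply hX hA, Measure.map_apply hX hA,
          Measure.restrict_apply (hX hA), Measure.restrict_apply (hX hA)]
        have e1 : X ⁻¹' A ∩ s = {ω | Ystar ω = i ∧ Y ω = j ∧ X ω ∈ A} := by
          ext ω; simp only [Set.mem_inter_iff, Set.mem_preimage, Set.mem_setOf_eq, hs_def]; tauto
        have e2 : X ⁻¹' A ∩ t = {ω | Y ω = j ∧ X ω ∈ A} := by
          ext ω; simp only [Set.mem_inter_iff, Set.mem_preimage, Set.mem_setOf_eq, ht_def]; tauto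
        rw [e1, e2]; exact hpram i j A hA
      -- nonnegativity of P i j
      have hPpos : 0 ≤ P i j := by
        have h1 := hpram i j Set.univ MeasurableSet.univ
        simp only [Set.mem_univ, and_true] at h1
        have htt : (μ t).toReal > 0 := by
          refine ENNReal.toReal_pos h0 (measure_ne_top μ t)
        have hst' : 0 ≤ (μ {ω | Ystar ω = i ∧ Y ω = j}).toReal := ENNReal.toReal_nonneg
        nlinarith [h1]
      -- the pushforward measures coincide up to the scalar P i j
      have hmeas_eq : (μ.restrict s).map X = ENNReal.ofReal (P i j) • (μ.restrict t).map X := by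
        ext A hA
        have hfin1 : ((μ.restrict s).map X) A ≠ ⊤ := by
          rw [Measure.map_apply hX hA, Measure.restrict_apply (hX hA)]
          exact measure_ne_top μ _
        have hfin2 : ((μ.restrict t).map X) A ≠ ⊤ := by
          rw [Measure.map_apply hX hA, Measure.restrict_apply (hX hA)]
          exact measure_ne_top μ _
        have := key A hA
        rw [Measure.smul_apply, smul_eq_mul]
        rw [← ENNReal.ofReal_toReal hfin1, this, ← ENNReal.ofReal_toReal hfin2,
          ← ENNReal.ofReal_mul hPpos, ENNReal.ofReal_toReal hfin2]
      have hint1 : ∫ ω in s, U k (X ω) ∂μ = ∫ x, U k x ∂((μ.restrict s).map X) :=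
        (integral_map hX.aemeasurable (hU k).aestronglyMeasurable).symm
      have hint2 : ∫ ω in t, U k (X ω) ∂μ = ∫ x, U k x ∂((μ.restrict t).map X) :=
        (integral_map hX.aemeasurable (hU k).aestronglyMeasurable).symm
      rw [hint1, hint2, hmeas_eq, integral_smul_measure, ENNReal.toReal_ofReal hPpos]
  -- The target expectation computation
  have hmean' : ∫ ω, φ (Ystar ω) (X ω) ∂μ = 0 := by
    -- decompose over the joint values of (Ystar, Y)
    have hW : Measurable (fun ω => (Ystar ω, Y ω)) := hYstar.prodMk hY
    have hdec := pram_decomp_aux μ (fun ω => (Ystar ω, Y ω)) hW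
      (fun p ω => φ p.1 (X ω)) (fun p => hφint p.1)
    simp only at hdec
    rw [hdec, Fintype.sum_prod_type]
    have hpair : ∀ (i j : Fin K),
        {ω | (Ystar ω, Y ω) = (i, j)} = {ω | Ystar ω = i ∧ Y ω = j} := by
      intro i j; ext ω; simp [Prod.ext_iff]
    have hstep : ∀ (i j : Fin K),
        ∫ ω in {ω | (Ystar ω, Y ω) = (i, j)}, φ i (X ω) ∂μ
          = ∑ k : Fin K, (P⁻¹ k i * P i j) • ∫ ω in {ω | Y ω = j}, U k (X ω) ∂μ := by
      intro i j
      rw [hpair]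
      have : ∀ ω, φ i (X ω) = ∑ k : Fin K, P⁻¹ k i • U k (X ω) := fun ω => hφ i (X ω)
      rw [integral_congr_ae (Filter.Eventually.of_forall this), integral_finset_sum]
      · refine Finset.sum_congr rfl fun k _ => ?_
        rw [integral_smul, stepC i j k, smul_smul]
      · exact fun k _ => ((hUint k).smul (P⁻¹ k i)).restrict
    calc ∑ i : Fin K, ∑ j : Fin K,
          ∫ ω in {ω | (Ystar ω, Y ω) = (i, j)}, φ i (X ω) ∂μ
        = ∑ i : Fin K, ∑ j : Fin K, ∑ k : Fin K,
            (P⁻¹ k i * P i j) • ∫ ω in {ω | Y ω = j}, U k (X ω) ∂μ := by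
          exact Finset.sum_congr rfl fun i _ => Finset.sum_congr rfl fun j _ => hstep i j
      _ = ∑ j : Fin K, ∑ k : Fin K,
            (∑ i : Fin K, P⁻¹ k i * P i j) • ∫ ω in {ω | Y ω = j}, U k (X ω) ∂μ := by
          rw [Finset.sum_comm]
          refine Finset.sum_congr rfl fun j _ => ?_
          rw [Finset.sum_comm]
          refine Finset.sum_congr rfl fun k _ => ?_
          rw [Finset.sum_smul]
      _ = ∑ j : Fin K, ∫ ω in {ω | Y ω = j}, U j (X ω) ∂μ := by
          refine Finset.sum_congr rfl fun j _ => ?_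
          have hinv : ∀ k : Fin K, ∑ i : Fin K, P⁻¹ k i * P i j
              = if k = j then (1 : ℝ) else 0 := by
            intro k
            rw [← Matrix.mul_apply, Matrix.nonsing_inv_mul P hP, Matrix.one_apply]
          simp only [hinv, ite_smul, one_smul, zero_smul]
          rw [Finset.sum_ite_eq' Finset.univ j
            (fun k => ∫ ω in {ω | Y ω = j}, U k (X ω) ∂μ)]
          simp
      _ = ∫ ω, U (Y ω) (X ω) ∂μ := by
          rw [pram_decomp_aux μ Y hY (fun j ω => U j (X ω)) hUint]
      _ = 0 := hmean
  -- Package via the strong law of large numbers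
  set g : 𝒳 × Fin K → (Fin d → ℝ) := fun p => φ p.2 p.1 with hg_def
  have hg : Measurable g := by
    have : g = fun p => ∑ i : Fin K,
        Set.indicator {q : 𝒳 × Fin K | q.2 = i} (fun q => φ i q.1) p := by
      funext p
      rw [Finset.sum_eq_single p.2]
      · rw [Set.indicator_of_mem (by simp : p ∈ {q : 𝒳 × Fin K | q.2 = p.2})]
      · intro b _ hb
        exact Set.indicator_of_notMem (fun h => hb (by simpa using h.symm)) _
      · simp
    rw [this]
    exact Finset.measurable_sum _ fun i _ =>
      ((hφm i).comp measurable_fst).indicator (measurable_snd (measurableSet_singleton i))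
  set Z : ℕ → Ω → (Fin d → ℝ) := fun n ω => g (Xs n ω, Ys n ω) with hZ_def
  have hid0 : IdentDistrib (Z 0) (fun ω => g (X ω, Ystar ω)) μ μ := (hident 0).comp hg
  have htgt : Integrable (fun ω => g (X ω, Ystar ω)) μ := by
    have : (fun ω => g (X ω, Ystar ω)) = fun ω => φ (Ystar ω) (X ω) := rfl
    rw [this]
    have h1 := pram_decomp_aux μ Ystar hYstar (fun i ω => φ i (X ω)) hφint
    have heq : (fun ω => φ (Ystar ω) (X ω))
        = fun ω => ∑ i : Fin K, Set.indicator {ω | Ystar ω = i} (fun ω => φ i (X ω)) ω := by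
      funext ω
      rw [Finset.sum_eq_single (Ystar ω)]
      · rw [Set.indicator_of_mem (by simp : ω ∈ {ω' | Ystar ω' = Ystar ω})]
      · intro b _ hb
        exact Set.indicator_of_notMem (fun h => hb (by simpa using h.symm)) _
      · simp
    rw [heq]
    exact integrable_finset_sum _ fun i _ =>
      (hφint i).indicator (hYstar (measurableSet_singleton i))
  have hintZ0 : Integrable (Z 0) μ := hid0.integrable_iff.mpr htgt
  have hpairZ : Pairwise (Function.onFun (IndepFun · · μ) Z) := fun i j hij =>
    (hindep.indepFun hij).comp hg hg
  have hidZ : ∀ n, IdentDistrib (Z n) (Z 0) μ μ := fun n =>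
    ((hident n).trans (hident 0).symm).comp hg
  have hsl := strong_law_ae Z hintZ0 hpairZ hidZ
  have hEZ : ∫ ω, Z 0 ω ∂μ = 0 := by
    rw [hid0.integral_eq]
    exact hmean'
  rw [hEZ] at hsl
  filter_upwards [hsl] with ω hω
  exact hω
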